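/- Let m,n be positive integers with n odd, and let ζ_{2m} = e^{2πi/(2m)}, ζ_n = e^{2πi/n}. Then ∏_{i=1}^{m-1} ∏_{j=1}^{(n-1)/2} (ζ_{2m}^i + ζ_{2m}^{-i} + ζ_n^j + ζ_n^{-j}) = ζ_n^N · ∏_{j=1}^{(n-1)/2} (ξ^{mj}-1)/(ξ^j-1) for some integer N, where ξ = ζ_n². In particular, if gcd(m,n) > 1 this product is 0. -/

import Mathlib

/-- `ζ_N = e^{2πi/N}`. -/
noncomputable def zeta (N : ℕ) : ℂ := Complex.exp (2 * Real.pi * Complex.I / N)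

lemma zeta_prim (N : ℕ) (hN : N ≠ 0) : IsPrimitiveRoot (zeta N) N :=
  Complex.isPrimitiveRoot_exp N hN

lemma zeta_ne_zero (N : ℕ) : zeta N ≠ 0 := Complex.exp_ne_zero _

lemma prod_range_root {ζ : ℂ} {N : ℕ} (hN : 0 < N) (h : IsPrimitiveRoot ζ N) (t : ℂ) :
    ∏ i ∈ Finset.range N, (t - ζ ^ i) = t ^ N - 1 := by
  have h2 := X_pow_sub_C_eq_prod h hN (one_pow N)
  have h3 := congrArg (Polynomial.eval t) h2
  simpa [Polynomial.eval_prod] using h3.symm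

lemma zpow_prod (a : ℂ) (ha : a ≠ 0) (s : Finset ℕ) (f : ℕ → ℤ) :
    ∏ j ∈ s, a ^ (f j) = a ^ (∑ j ∈ s, f j) := by
  induction s using Finset.cons_induction with
  | empty => simp
  | cons j s hj ih => rw [Finset.prod_cons, Finset.sum_cons, ih, zpow_add₀ ha]

lemma cheb (m : ℕ) (hm : 0 < m) (t : ℂ) (ht0 : t ≠ 0) (ht1 : t ^ 2 ≠ 1) :
    ∏ i ∈ Finset.Icc 1 (m - 1),
        (t + t⁻¹ - (zeta (2 * m) ^ i + (zeta (2 * m) ^ i)⁻¹)) =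
      (t ^ (2 * m) - 1) / ((t ^ 2 - 1) * t ^ (m - 1)) := by
  set ζ := zeta (2 * m) with hζdef
  have hprim : IsPrimitiveRoot ζ (2 * m) := zeta_prim _ (by omega)
  have hζ0 : ζ ≠ 0 := zeta_ne_zero _
  have hIcc : Finset.Icc 1 (m - 1) = Finset.Ico 1 m := by
    rw [← Finset.Ico_add_one_right_eq_Icc]; congr 1; omega
  have hfull : ∏ i ∈ Finset.range (2 * m), (t - ζ ^ i) = t ^ (2 * m) - 1 :=
    prod_range_root (by omega) hprim t
  rw [Finset.range_eq_Ico, ← Finset.prod_Ico_consecutive _ (by omega : 0 ≤ m)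
    (by omega : m ≤ 2 * m)] at hfull
  rw [Finset.prod_eq_prod_Ico_succ_bot (by omega : 0 < m)] at hfull
  rw [Finset.prod_eq_prod_Ico_succ_bot (by omega : m < 2 * m)] at hfull
  have hreindex : ∏ i ∈ Finset.Ico (m + 1) (2 * m), (t - ζ ^ i)
      = ∏ j ∈ Finset.Ico 1 m, (t - (ζ ^ j)⁻¹) := by
    refine Finset.prod_nbij' (fun i => 2 * m - i) (fun j => 2 * m - j) ?_ ?_ ?_ ?_ ?_
    · intro a ha; simp only [Finset.mem_Ico] at ha ⊢; omega
    · intro a ha; simp only [Finset.mem_Ico] at ha ⊢; omega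
    · intro a ha; simp only [Finset.mem_Ico] at ha; show 2 * m - (2 * m - a) = a; omega
    · intro a ha; simp only [Finset.mem_Ico] at ha; show 2 * m - (2 * m - a) = a; omega
    · intro i hi
      simp only [Finset.mem_Ico] at hi
      show t - ζ ^ i = t - (ζ ^ (2 * m - i))⁻¹
      congr 1
      have h1 : ζ ^ (2 * m - i) * ζ ^ i = 1 := by
        rw [← pow_add, Nat.sub_add_cancel (by omega)]
        exact hprim.pow_eq_one
      exact eq_inv_of_mul_eq_one_right h1
  have hm1 : ζ ^ m = -1 := by
    have h2 : ζ ^ m * ζ ^ m = 1 := by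
      rw [← pow_add, show m + m = 2 * m by ring]; exact hprim.pow_eq_one
    rcases mul_self_eq_one_iff.mp h2 with h | h
    · exact absurd h (hprim.pow_ne_one_of_pos_of_lt hm.ne' (by omega))
    · exact h
  have hpair : ∀ j ∈ Finset.Ico 1 m,
      (t - ζ ^ j) * (t - (ζ ^ j)⁻¹) = t * (t + t⁻¹ - (ζ ^ j + (ζ ^ j)⁻¹)) := by
    intro j _
    have hz : ζ ^ j ≠ 0 := pow_ne_zero _ hζ0
    field_simp
    ring
  simp only [pow_zero, zero_add] at hfull
  rw [hm1, hreindex] at hfull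
  have hP : (∏ k ∈ Finset.Ico 1 m, (t - ζ ^ k)) * ∏ k ∈ Finset.Ico 1 m, (t - (ζ ^ k)⁻¹)
      = t ^ (m - 1) * ∏ j ∈ Finset.Ico 1 m, (t + t⁻¹ - (ζ ^ j + (ζ ^ j)⁻¹)) := by
    rw [← Finset.prod_mul_distrib, Finset.prod_congr rfl hpair,
      Finset.prod_mul_distrib, Finset.prod_const, Nat.card_Ico]
  have hden : (t ^ 2 - 1) * t ^ (m - 1) ≠ 0 :=
    mul_ne_zero (sub_ne_zero.mpr ht1) (pow_ne_zero _ ht0)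
  rw [hIcc, eq_div_iff hden]
  linear_combination hfull - ((t - 1) * (t + 1)) * hP

theorem stmt7 (m n : ℕ) (hm : 0 < m) (hn : Odd n) :
    (∃ N : ℤ,
        ∏ i ∈ Finset.Icc 1 (m - 1), ∏ j ∈ Finset.Icc 1 ((n - 1) / 2),
            (zeta (2 * m) ^ (i : ℤ) + zeta (2 * m) ^ (-(i : ℤ)) +
              zeta n ^ (j : ℤ) + zeta n ^ (-(j : ℤ))) =
          zeta n ^ N *
            ∏ j ∈ Finset.Icc 1 ((n - 1) / 2),
              ((zeta n ^ 2) ^ (m * j) - 1) / ((zeta n ^ 2) ^ j - 1)) ∧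
      (1 < Nat.gcd m n →
        ∏ i ∈ Finset.Icc 1 (m - 1), ∏ j ∈ Finset.Icc 1 ((n - 1) / 2),
            (zeta (2 * m) ^ (i : ℤ) + zeta (2 * m) ^ (-(i : ℤ)) +
              zeta n ^ (j : ℤ) + zeta n ^ (-(j : ℤ))) = 0) := by
  have hn0 : n ≠ 0 := by rcases hn with ⟨k, hk⟩; omega
  have hprim : IsPrimitiveRoot (zeta n) n := zeta_prim n hn0
  have hz0 : zeta n ≠ 0 := zeta_ne_zero n
  have hden : ∀ j ∈ Finset.Icc 1 ((n - 1) / 2), (zeta n ^ 2) ^ j - 1 ≠ 0 := by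
    intro j hj
    simp only [Finset.mem_Icc] at hj
    have h2j : j * 2 ≤ n - 1 := (Nat.le_div_iff_mul_le (by norm_num)).mp hj.2
    intro h
    have h1 : zeta n ^ (2 * j) = 1 := by
      rw [pow_mul]; exact sub_eq_zero.mp h
    have h2 := (hprim.pow_eq_one_iff_dvd _).mp h1
    have := Nat.le_of_dvd (by omega) h2
    omega
  have inner : ∀ j ∈ Finset.Icc 1 ((n - 1) / 2),
      ∏ i ∈ Finset.Icc 1 (m - 1),
          (zeta (2 * m) ^ (i : ℤ) + zeta (2 * m) ^ (-(i : ℤ)) +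
            zeta n ^ (j : ℤ) + zeta n ^ (-(j : ℤ)))
        = zeta n ^ ((1 - (m : ℤ)) * j) *
            (((zeta n ^ 2) ^ (m * j) - 1) / ((zeta n ^ 2) ^ j - 1)) := by
    intro j hj
    set w := zeta n ^ j with hw
    have hw0 : w ≠ 0 := pow_ne_zero _ hz0
    have hxi_j : (zeta n ^ 2) ^ j = w ^ 2 := by
      rw [← pow_mul, hw, ← pow_mul]; congr 1; ring
    have hB : w ^ 2 - 1 ≠ 0 := by rw [← hxi_j]; exact hden j hj
    have hch := cheb m hm (-w) (neg_ne_zero.mpr hw0)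
      (by rw [neg_sq]; exact sub_ne_zero.mp hB)
    have hfac : ∀ i ∈ Finset.Icc 1 (m - 1),
        zeta (2 * m) ^ (i : ℤ) + zeta (2 * m) ^ (-(i : ℤ)) +
            zeta n ^ (j : ℤ) + zeta n ^ (-(j : ℤ))
          = (-1) * (-w + (-w)⁻¹ - (zeta (2 * m) ^ i + (zeta (2 * m) ^ i)⁻¹)) := by
      intro i _
      rw [zpow_neg, zpow_natCast, zpow_neg, zpow_natCast, inv_neg, hw]
      ring
    have hcard : (Finset.Icc 1 (m - 1)).card = m - 1 := by rw [Nat.card_Icc]; omega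
    rw [Finset.prod_congr rfl hfac, Finset.prod_mul_distrib, Finset.prod_const, hcard, hch]
    have hxi_m : (zeta n ^ 2) ^ (m * j) = w ^ (2 * m) := by
      rw [← pow_mul, hw, ← pow_mul]; congr 1; ring
    have h2m : (-w : ℂ) ^ (2 * m) = w ^ (2 * m) := Even.neg_pow (even_two_mul m) w
    have hmeq : (-w : ℂ) ^ (m - 1) = (-1) ^ (m - 1) * w ^ (m - 1) := by
      rw [neg_pow]
    have hE : zeta n ^ ((1 - (m : ℤ)) * j) * w ^ (m - 1) = 1 := by
      have hwp : (w : ℂ) ^ (m - 1) = zeta n ^ ((j * (m - 1) : ℕ) : ℤ) := by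
        rw [zpow_natCast, hw, ← pow_mul]
      rw [hwp, ← zpow_add₀ hz0,
        show (1 - (m : ℤ)) * j + ((j * (m - 1) : ℕ) : ℤ) = 0 by
          push_cast [Nat.cast_sub hm]; ring,
        zpow_zero]
    rw [hxi_m, hxi_j, h2m, hmeq, neg_sq]
    have hc : ((-1 : ℂ)) ^ (m - 1) ≠ 0 := pow_ne_zero _ (by norm_num)
    have hD : (w : ℂ) ^ (m - 1) ≠ 0 := pow_ne_zero _ hw0
    have habs : ∀ (A B c D E : ℂ), B ≠ 0 → c ≠ 0 → D ≠ 0 → E * D = 1 →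
        c * (A / (B * (c * D))) = E * (A / B) := by
      intro A B c D E hB' hc' hD' hED
      field_simp
      linear_combination (-A) * hED
    exact habs _ _ _ _ _ hB hc hD hE
  have key : ∏ i ∈ Finset.Icc 1 (m - 1), ∏ j ∈ Finset.Icc 1 ((n - 1) / 2),
        (zeta (2 * m) ^ (i : ℤ) + zeta (2 * m) ^ (-(i : ℤ)) +
          zeta n ^ (j : ℤ) + zeta n ^ (-(j : ℤ)))
      = zeta n ^ (∑ j ∈ Finset.Icc 1 ((n - 1) / 2), (1 - (m : ℤ)) * j) *
          ∏ j ∈ Finset.Icc 1 ((n - 1) / 2),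
            ((zeta n ^ 2) ^ (m * j) - 1) / ((zeta n ^ 2) ^ j - 1) := by
    rw [Finset.prod_comm, Finset.prod_congr rfl inner, Finset.prod_mul_distrib,
      zpow_prod _ hz0]
  refine ⟨⟨_, key⟩, ?_⟩
  intro hgcd
  rw [key]
  set d := Nat.gcd m n with hd
  have hd_n : d ∣ n := Nat.gcd_dvd_right m n
  have hd_m : d ∣ m := Nat.gcd_dvd_left m n
  set j₀ := n / d with hj₀
  have hj0d : j₀ * d = n := Nat.div_mul_cancel hd_n
  have hdn : d ≤ n := Nat.le_of_dvd (by omega) hd_n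
  have h2j0 : j₀ * 2 ≤ n := by
    calc j₀ * 2 ≤ j₀ * d := Nat.mul_le_mul_left _ hgcd
    _ = n := hj0d
  have hne : j₀ * 2 ≠ n := by
    intro h
    exact (Nat.not_even_iff_odd.mpr hn) ⟨j₀, by omega⟩
  have hj0mem : j₀ ∈ Finset.Icc 1 ((n - 1) / 2) := by
    simp only [Finset.mem_Icc]
    constructor
    · rw [hj₀, Nat.one_le_div_iff (by omega)]; exact hdn
    · rw [Nat.le_div_iff_mul_le (by norm_num)]; omega
  apply mul_eq_zero_of_right
  apply Finset.prod_eq_zero hj0mem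
  obtain ⟨k, hk⟩ := hd_m
  have hmul : m * j₀ = k * n := by
    rw [hk, ← hj0d]
    ring
  have h1 : (zeta n ^ 2) ^ (m * j₀) = 1 := by
    rw [← pow_mul]
    exact (hprim.pow_eq_one_iff_dvd _).mpr ⟨2 * k, by rw [hmul]; ring⟩
  rw [h1]
  simp
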